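/- arXiv:2501.08116 — 7 statements merged into one kernel-verified Lean document; each statement's English description precedes it below -/
import Mathlib

section
/- For a non-integer β > 1, the initial density function h_β(x) := Σ_{n ≥ 0, T_β^n(1) > x} β^{-n} is right continuous at every point of [0,1). -/
open MeasureTheory Filter Set

/-- The orbit of `1` under the β-transformation: `betaOrb β 0 = 1`,
`betaOrb β (n+1) = β * betaOrb β n (mod 1)`. -/
noncomputable def betaOrb (β : ℝ) : ℕ → ℝ
  | 0 => 1
  | n + 1 => Int.fract (β * betaOrb β n)

/-- The unnormalized density `h_β(x) = Σ_{n ≥ 0, T_β^n(1) > x} β^{-n}`. -/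
noncomputable def hBeta (β : ℝ) (x : ℝ) : ℝ :=
  ∑' n : ℕ, if x < betaOrb β n then (β ^ n)⁻¹ else 0

/-- The normalization constant `K_β = Σ_{n ≥ 0} T_β^n(1) / β^n`. -/
noncomputable def KBeta (β : ℝ) : ℝ :=
  ∑' n : ℕ, betaOrb β n / β ^ n

/-- The Rényi–Parry measure: density `h_β / K_β` w.r.t. Lebesgue measure on `[0,1)`. -/
noncomputable def nuBeta (β : ℝ) : Measure ℝ :=
  (volume.restrict (Set.Ico (0 : ℝ) 1)).withDensity
    (fun x => ENNReal.ofReal (hBeta β x / KBeta β))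

theorem stmt_2 (β : ℝ) (hβ : 1 < β) (hni : ¬ ∃ k : ℤ, β = k)
    (x₀ : ℝ) (hx₀ : x₀ ∈ Set.Ico (0 : ℝ) 1) :
    Filter.Tendsto (hBeta β) (nhdsWithin x₀ (Set.Ici x₀)) (nhds (hBeta β x₀)) := by
  have hβ0 : (0 : ℝ) < β := lt_trans one_pos hβ
  unfold hBeta
  apply tendsto_tsum_of_dominated_convergence (bound := fun n : ℕ => (β ^ n)⁻¹)
  · simpa [inv_pow] using summable_geometric_of_lt_one (by positivity)
      (inv_lt_one_of_one_lt₀ hβ)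
  · intro n
    by_cases h : x₀ < betaOrb β n
    · have : ∀ᶠ x in nhdsWithin x₀ (Set.Ici x₀),
          (if x < betaOrb β n then (β ^ n)⁻¹ else 0) = (β ^ n)⁻¹ := by
        filter_upwards [nhdsWithin_le_nhds (eventually_lt_nhds h)] with x hx
        simp [hx]
      rw [if_pos h]
      exact tendsto_const_nhds.congr' (Filter.EventuallyEq.symm this)
    · have : ∀ᶠ x in nhdsWithin x₀ (Set.Ici x₀),
          (if x < betaOrb β n then (β ^ n)⁻¹ else 0) = 0 := by
        filter_upwards [self_mem_nhdsWithin] with x hx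
        rw [if_neg (not_lt.mpr (le_trans (not_lt.mp h) hx))]
      rw [if_neg h]
      exact tendsto_const_nhds.congr' (Filter.EventuallyEq.symm this)
  · filter_upwards with x n
    by_cases h : x < betaOrb β n <;> simp [h, abs_pow, abs_of_pos hβ0, inv_nonneg.mpr (pow_nonneg hβ0.le n)]
end

section
/- Let β₁ > 1 be the positive root of x² - qx - p = 0 where p, q are positive integers with p ≤ q, and let β₂ = β₁ + 1. Then T_{β₂}^n(1) = β₁ - q for every n ≥ 1; i.e., the point β₁ - q is a fixed point of T_{β₂} and is the orbit of 1 under T_{β₂}. -/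
open MeasureTheory Filter Set

theorem stmt_7 (p q : ℕ) (hp : 1 ≤ p) (hpq : p ≤ q) (β₁ : ℝ) (hβ₁ : 1 < β₁)
    (hroot : β₁ ^ 2 - q * β₁ - p = 0) (β₂ : ℝ) (hβ₂ : β₂ = β₁ + 1) :
    (∀ n : ℕ, 1 ≤ n → betaOrb β₂ n = β₁ - q) ∧
      Int.fract (β₂ * (β₁ - q)) = β₁ - q := by
  have hp' : (1 : ℝ) ≤ p := by exact_mod_cast hp
  have hpq' : (p : ℝ) ≤ q := by exact_mod_cast hpq
  have hkey : β₁ * (β₁ - q) = p := by nlinarith [hroot]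
  have hq : (q : ℝ) < β₁ := by nlinarith
  have hq1 : β₁ < q + 1 := by nlinarith
  have hfix : Int.fract (β₂ * (β₁ - q)) = β₁ - q := by
    have : β₂ * (β₁ - q) = (p : ℤ) + (β₁ - q) := by
      push_cast; nlinarith
    rw [this, Int.fract_intCast_add, Int.fract_eq_self.2 ⟨by linarith, by linarith⟩]
  have h1 : betaOrb β₂ 1 = β₁ - q := by
    have : β₂ * betaOrb β₂ 0 = (((q : ℤ) + 1 : ℤ) : ℝ) + (β₁ - q) := by
      show β₂ * 1 = _; push_cast; linarith
    show Int.fract (β₂ * betaOrb β₂ 0) = _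
    rw [this, Int.fract_intCast_add, Int.fract_eq_self.2 ⟨by linarith, by linarith⟩]
  refine ⟨?_, hfix⟩
  intro n hn
  induction n with
  | zero => omega
  | succ m ih =>
    rcases Nat.eq_zero_or_pos m with hm | hm
    · subst hm; exact h1
    · show Int.fract (β₂ * betaOrb β₂ m) = _
      rw [ih hm]; exact hfix
end

section
/- Let β₁ > 1 be the positive root of x² - qx - p = 0 where p, q are positive integers with p ≤ q, and let β₂ = β₁ + 1. Then the unnormalized density functions coincide: for all x ∈ [0,1), h_{β₁}(x) = h_{β₂}(x), where both equal 1_{[0,1)}(x) + (1/β₁)·1_{[0, β₁ - q)}(x). -/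
open MeasureTheory Filter Set

theorem stmt_8 (p q : ℕ) (hp : 1 ≤ p) (hpq : p ≤ q) (β₁ : ℝ) (hβ₁ : 1 < β₁)
    (hroot : β₁ ^ 2 - q * β₁ - p = 0) (β₂ : ℝ) (hβ₂ : β₂ = β₁ + 1) :
    ∀ x : ℝ, 0 ≤ x → x < 1 →
      hBeta β₁ x = hBeta β₂ x ∧
      hBeta β₁ x = 1 + (if x < β₁ - q then β₁⁻¹ else 0) := by
  intro x hx0 hx1
  have hp1 : (1:ℝ) ≤ p := by exact_mod_cast hp
  have hpq' : (p:ℝ) ≤ q := by exact_mod_cast hpq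
  have hβ₁0 : 0 < β₁ := by linarith
  have hqβ : (q:ℝ) < β₁ := by nlinarith
  have hβq1 : β₁ - q < 1 := by nlinarith
  have hβq0 : 0 < β₁ - q := by linarith
  -- orbit of β₁
  have ho1 : betaOrb β₁ 1 = β₁ - q := by
    show Int.fract (β₁ * betaOrb β₁ 0) = β₁ - q
    have h : β₁ * betaOrb β₁ 0 = ((q : ℤ) : ℝ) + (β₁ - q) := by
      show β₁ * 1 = _; push_cast; ring
    rw [h, Int.fract_intCast_add, Int.fract_eq_self.2 ⟨le_of_lt hβq0, hβq1⟩]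
  have ho2 : betaOrb β₁ 2 = 0 := by
    show Int.fract (β₁ * betaOrb β₁ 1) = 0
    rw [ho1]
    have h : β₁ * (β₁ - q) = ((p : ℤ) : ℝ) := by push_cast; nlinarith
    rw [h, Int.fract_intCast]
  have hoz : ∀ n, betaOrb β₁ (n + 2) = 0 := by
    intro n
    induction n with
    | zero => exact ho2
    | succ m ih =>
      show Int.fract (β₁ * betaOrb β₁ (m + 2)) = 0
      rw [ih]; simp
  -- orbit of β₂
  have hoc : ∀ n, betaOrb β₂ (n + 1) = β₁ - q := by
    intro n
    induction n with
    | zero =>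
      show Int.fract (β₂ * betaOrb β₂ 0) = β₁ - q
      have h : β₂ * betaOrb β₂ 0 = (((q : ℤ) + 1 : ℤ) : ℝ) + (β₁ - q) := by
        show β₂ * 1 = _; push_cast; rw [hβ₂]; ring
      rw [h, Int.fract_intCast_add, Int.fract_eq_self.2 ⟨le_of_lt hβq0, hβq1⟩]
    | succ m ih =>
      show Int.fract (β₂ * betaOrb β₂ (m + 1)) = β₁ - q
      rw [ih]
      have h : β₂ * (β₁ - q) = ((p : ℤ) : ℝ) + (β₁ - q) := by
        push_cast; rw [hβ₂]; nlinarith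
      rw [h, Int.fract_intCast_add, Int.fract_eq_self.2 ⟨le_of_lt hβq0, hβq1⟩]
  -- value of hBeta β₁
  have e1 : hBeta β₁ x = 1 + (if x < β₁ - q then β₁⁻¹ else 0) := by
    unfold hBeta
    rw [tsum_eq_sum (s := ({0, 1} : Finset ℕ)) ?_]
    · rw [Finset.sum_insert (by decide), Finset.sum_singleton, ho1]
      have h0 : betaOrb β₁ 0 = 1 := rfl
      rw [h0, if_pos hx1]
      simp
    · intro n hn
      have h2 : 2 ≤ n := by
        rcases n with _ | _ | m
        · simp at hn
        · simp at hn
        · omega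
      obtain ⟨m, rfl⟩ : ∃ m, n = m + 2 := ⟨n - 2, by omega⟩
      rw [hoz]
      rw [if_neg (by linarith)]
  have hβ₂1 : 1 < β₂ := by rw [hβ₂]; linarith
  have hβ₂0 : 0 < β₂ := by linarith
  -- value of hBeta β₂
  have e2 : hBeta β₂ x = 1 + (if x < β₁ - q then β₁⁻¹ else 0) := by
    by_cases hxc : x < β₁ - q
    · have hcong : ∀ n : ℕ,
          (if x < betaOrb β₂ n then ((β₂ : ℝ) ^ n)⁻¹ else 0) = (β₂⁻¹) ^ n := by
        intro n
        rcases n with _ | m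
        · show (if x < betaOrb β₂ 0 then _ else _) = _
          have h0 : betaOrb β₂ 0 = 1 := rfl
          rw [h0, if_pos hx1]; simp
        · rw [hoc, if_pos hxc, inv_pow]
      rw [hBeta, tsum_congr hcong,
        tsum_geometric_of_lt_one (by positivity) (by
          rw [inv_lt_one_iff₀]; right; exact hβ₂1)]
      rw [if_pos hxc]
      have hβ₁ne : β₁ ≠ 0 := ne_of_gt hβ₁0
      have hβ₂ne : β₂ ≠ 0 := ne_of_gt hβ₂0
      rw [hβ₂]
      field_simp
      rw [add_sub_cancel_right, div_self hβ₁ne]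
    · rw [if_neg hxc, add_zero]
      unfold hBeta
      rw [tsum_eq_sum (s := ({0} : Finset ℕ)) ?_]
      · rw [Finset.sum_singleton]
        have h0 : betaOrb β₂ 0 = 1 := rfl
        rw [h0, if_pos hx1]; simp
      · intro n hn
        have h1 : 1 ≤ n := by
          rcases n with _ | m
          · simp at hn
          · omega
        obtain ⟨m, rfl⟩ : ∃ m, n = m + 1 := ⟨n - 1, by omega⟩
        rw [hoc, if_neg hxc]
  exact ⟨e1.trans e2.symm, e1⟩
end

section
/- Let β₁ > 1 be the positive root of x² - qx - p = 0 with p, q positive integers and p ≤ q, and let β₂ = β₁ + 1. Then the Rényi-Parry measures for T_{β₁} and T_{β₂} coincide: ν_{β₁} = ν_{β₂}. -/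
open MeasureTheory Filter Set

theorem stmt_9 (p q : ℕ) (hp : 1 ≤ p) (hpq : p ≤ q) (β₁ : ℝ) (hβ₁ : 1 < β₁)
    (hroot : β₁ ^ 2 - q * β₁ - p = 0) (β₂ : ℝ) (hβ₂ : β₂ = β₁ + 1) :
    nuBeta β₁ = nuBeta β₂ := by
  have hp' : (1:ℝ) ≤ (p:ℝ) := by exact_mod_cast hp
  have hpq' : (p:ℝ) ≤ (q:ℝ) := by exact_mod_cast hpq
  have hb0 : (0:ℝ) < β₁ := by linarith
  have hkey : β₁ * (β₁ - q) = p := by nlinarith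
  have hqβ : (q:ℝ) < β₁ := by nlinarith
  have ht1 : β₁ - (q:ℝ) < 1 := by nlinarith
  have ht0 : (0:ℝ) < β₁ - q := by nlinarith
  set t : ℝ := β₁ - q with htdef
  have hfract_t : Int.fract t = t := Int.fract_eq_self.2 ⟨le_of_lt ht0, ht1⟩
  clear_value t
  have hb2 : 1 < β₂ := by rw [hβ₂]; linarith
  have hr0 : (0:ℝ) ≤ β₂⁻¹ := by positivity
  have hr1 : β₂⁻¹ < 1 := inv_lt_one_of_one_lt₀ hb2
  -- orbits
  have ho1 : betaOrb β₁ 1 = t := by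
    show Int.fract (β₁ * betaOrb β₁ 0) = t
    have h : β₁ * betaOrb β₁ 0 = t + ((q:ℤ):ℝ) := by
      simp [betaOrb, htdef]
    rw [h, Int.fract_add_intCast, hfract_t]
  have ho1' : ∀ n, betaOrb β₁ (n+2) = 0 := by
    intro n
    induction n with
    | zero =>
      show Int.fract (β₁ * betaOrb β₁ 1) = 0
      rw [ho1, hkey]
      rw [show ((p:ℝ)) = ((p:ℤ):ℝ) by push_cast; ring, Int.fract_intCast]
    | succ k ih =>
      show Int.fract (β₁ * betaOrb β₁ (k+2)) = 0
      rw [ih, mul_zero, Int.fract_zero]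
  have ho2 : ∀ n, betaOrb β₂ (n+1) = t := by
    intro n
    induction n with
    | zero =>
      show Int.fract (β₂ * betaOrb β₂ 0) = t
      have h : β₂ * betaOrb β₂ 0 = t + (((q:ℤ)+1 : ℤ):ℝ) := by
        simp [betaOrb, hβ₂, htdef]; push_cast; ring
      rw [h, Int.fract_add_intCast, hfract_t]
    | succ k ih =>
      show Int.fract (β₂ * betaOrb β₂ (k+1)) = t
      rw [ih]
      have h : β₂ * t = ((p:ℤ):ℝ) + t := by
        push_cast; rw [hβ₂]; nlinarith
      rw [h, Int.fract_intCast_add, hfract_t]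
  have hbne : β₁ ≠ 0 := ne_of_gt hb0
  have h2ne : β₂ ≠ 0 := by positivity
  have e : (1:ℝ) - β₂⁻¹ = β₁ * β₂⁻¹ := by
    field_simp
    linarith
  have einv : ((1:ℝ) - β₂⁻¹)⁻¹ = 1 + β₁⁻¹ := by
    rw [e, mul_inv, inv_inv, hβ₂, mul_comm β₁⁻¹, add_mul, one_mul, mul_inv_cancel₀ hbne]
  -- hBeta computations
  have hB1 : ∀ x ∈ Set.Ico (0:ℝ) 1, hBeta β₁ x = 1 + (if x < t then β₁⁻¹ else 0) := by
    intro x hx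
    obtain ⟨hx0, hx1⟩ := hx
    unfold hBeta
    rw [tsum_eq_sum (s := {0, 1})]
    · rw [Finset.sum_pair (by norm_num : (0:ℕ) ≠ 1)]
      simp only [betaOrb, pow_zero, pow_one, inv_one, ho1]
      rw [if_pos hx1]
      congr 1
      exact ho1 ▸ rfl
    · intro n hn
      have hn2 : ∃ m, n = m + 2 := by
        rcases n with _ | _ | m
        · simp at hn
        · simp at hn
        · exact ⟨m, rfl⟩
      obtain ⟨m, rfl⟩ := hn2
      rw [ho1' m, if_neg (by linarith)]
  have hB2 : ∀ x ∈ Set.Ico (0:ℝ) 1, hBeta β₂ x = 1 + (if x < t then β₁⁻¹ else 0) := by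
    intro x hx
    obtain ⟨hx0, hx1⟩ := hx
    unfold hBeta
    by_cases h : x < t
    · have heq : (fun n : ℕ => if x < betaOrb β₂ n then (β₂ ^ n)⁻¹ else 0)
          = fun n : ℕ => (β₂⁻¹) ^ n := by
        funext n
        rcases n with _ | m
        · simp [betaOrb, hx1]
        · rw [ho2 m, if_pos h, inv_pow]
      rw [heq, tsum_geometric_of_lt_one hr0 hr1, if_pos h, einv]
    · rw [if_neg h, add_zero]
      rw [tsum_eq_sum (s := {0})]
      · simp [betaOrb, hx1]
      · intro n hn
        have hn1 : ∃ m, n = m + 1 := by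
          rcases n with _ | m
          · simp at hn
          · exact ⟨m, rfl⟩
        obtain ⟨m, rfl⟩ := hn1
        rw [ho2 m, if_neg h]
  -- KBeta
  have hK1 : KBeta β₁ = 1 + t / β₁ := by
    unfold KBeta
    rw [tsum_eq_sum (s := {0, 1})]
    · rw [Finset.sum_pair (by norm_num : (0:ℕ) ≠ 1), ho1]
      show (1:ℝ) / β₁ ^ 0 + t / β₁ ^ 1 = 1 + t / β₁
      rw [pow_zero, pow_one, div_one]
    · intro n hn
      have hn2 : ∃ m, n = m + 2 := by
        rcases n with _ | _ | m
        · simp at hn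
        · simp at hn
        · exact ⟨m, rfl⟩
      obtain ⟨m, rfl⟩ := hn2
      rw [ho1' m, zero_div]
  have hK2 : KBeta β₂ = 1 + t / β₁ := by
    unfold KBeta
    have heq : (fun n : ℕ => betaOrb β₂ n / β₂ ^ n)
        = fun n : ℕ => t * (β₂⁻¹) ^ n + (1 - t) * (if n = 0 then 1 else 0) := by
      funext n
      rcases n with _ | m
      · simp [betaOrb]
      · rw [ho2 m]
        simp only [Nat.succ_ne_zero, if_false, mul_zero, add_zero, inv_pow]
        rw [div_eq_mul_inv]
    rw [heq]
    have hs1 : Summable (fun n : ℕ => t * (β₂⁻¹) ^ n) :=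
      (summable_geometric_of_lt_one hr0 hr1).mul_left t
    have hs2 : Summable (fun n : ℕ => (1 - t) * (if n = 0 then 1 else 0)) := by
      apply summable_of_ne_finset_zero (s := {0})
      intro n hn
      simp only [Finset.mem_singleton] at hn
      rw [if_neg hn, mul_zero]
    have hz : ∀ n ∉ ({0} : Finset ℕ), ((1 - t) * if n = 0 then 1 else 0) = 0 := by
      intro n hn
      simp only [Finset.mem_singleton] at hn
      rw [if_neg hn, mul_zero]
    rw [Summable.tsum_add hs1 hs2, tsum_mul_left, tsum_geometric_of_lt_one hr0 hr1,
      tsum_eq_sum hz, einv]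
    norm_num
    rw [div_eq_mul_inv]
    ring
  -- conclude
  have hdens : (fun x => ENNReal.ofReal (hBeta β₁ x / KBeta β₁))
      =ᵐ[volume.restrict (Set.Ico (0:ℝ) 1)]
      (fun x => ENNReal.ofReal (hBeta β₂ x / KBeta β₂)) := by
    refine (ae_restrict_iff' measurableSet_Ico).2 (ae_of_all _ fun x hx => ?_)
    simp only [hB1 x hx, hB2 x hx, hK1, hK2]
  unfold nuBeta
  exact withDensity_congr_ae hdens
end

section
/- If β₁, β₂ > 1 are non-integers with identical Rényi-Parry measures ν_{β₁} = ν_{β₂}, then the unnormalized density functions agree everywhere: h_{β₁}(x) = h_{β₂}(x) for every x ∈ [0,1), and in particular the normalization constants satisfy K_{β₁} = K_{β₂}. -/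
open MeasureTheory Filter Set
open Topology

section Aux
variable {β : ℝ} (hβ : 1 < β)

lemma betaOrb_nonneg (n : ℕ) : 0 ≤ betaOrb β n := by
  cases n with
  | zero => norm_num [betaOrb]
  | succ n => exact Int.fract_nonneg _

lemma betaOrb_le_one (n : ℕ) : betaOrb β n ≤ 1 := by
  cases n with
  | zero => norm_num [betaOrb]
  | succ n => exact (Int.fract_lt_one _).le

lemma betaOrb_lt_one {n : ℕ} (hn : n ≠ 0) : betaOrb β n < 1 := by
  cases n with
  | zero => simp at hn
  | succ n => exact Int.fract_lt_one _

lemma summable_geom (hβ : 1 < β) : Summable (fun n : ℕ => (β ^ n)⁻¹) := by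
  simp_rw [← inv_pow]
  exact summable_geometric_of_lt_one (by positivity) (by
    rw [inv_lt_one_iff₀]; right; exact hβ)

lemma hBeta_term_bound (hβ : 1 < β) (x : ℝ) (n : ℕ) :
    ‖if x < betaOrb β n then (β ^ n)⁻¹ else 0‖ ≤ (β ^ n)⁻¹ := by
  have hb0 : (0:ℝ) < β := lt_trans one_pos hβ
  have h0 : (0:ℝ) ≤ (β ^ n)⁻¹ := by positivity
  split <;> simp [Real.norm_eq_abs, abs_of_nonneg h0, h0, abs_of_pos hb0]

lemma hBeta_summable (hβ : 1 < β) (x : ℝ) :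
    Summable (fun n : ℕ => if x < betaOrb β n then (β ^ n)⁻¹ else 0) :=
  (summable_geom hβ).of_norm_bounded (hBeta_term_bound hβ x)

lemma hBeta_antitone (hβ : 1 < β) : Antitone (hBeta β) := by
  intro x y hxy
  refine Summable.tsum_le_tsum (fun n => ?_) (hBeta_summable hβ y) (hBeta_summable hβ x)
  have hb0 : (0:ℝ) < β := lt_trans one_pos hβ
  by_cases h : y < betaOrb β n
  · simp [h, lt_of_le_of_lt hxy h]
  · simp only [if_neg h]
    split <;> positivity

lemma hBeta_nonneg (hβ : 1 < β) (x : ℝ) : 0 ≤ hBeta β x := by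
  refine tsum_nonneg fun n => ?_
  have hb0 : (0:ℝ) < β := lt_trans one_pos hβ
  split <;> positivity

lemma KBeta_summable (hβ : 1 < β) : Summable (fun n : ℕ => betaOrb β n / β ^ n) := by
  refine (summable_geom hβ).of_norm_bounded (fun n => ?_)
  have hb0 : (0:ℝ) < β := lt_trans one_pos hβ
  have h1 : (0:ℝ) < β ^ n := by positivity
  have hnn : (0:ℝ) ≤ betaOrb β n / β ^ n := div_nonneg (betaOrb_nonneg n) h1.le
  rw [Real.norm_eq_abs, abs_of_nonneg hnn, div_le_iff₀ h1, inv_mul_cancel₀ h1.ne']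
  exact betaOrb_le_one n

lemma one_le_KBeta (hβ : 1 < β) : 1 ≤ KBeta β := by
  have hb0 : (0:ℝ) < β := lt_trans one_pos hβ
  have := Summable.le_tsum (KBeta_summable hβ) 0
    (fun n _ => div_nonneg (betaOrb_nonneg n) (by positivity))
  simpa [betaOrb, KBeta] using this

lemma KBeta_pos (hβ : 1 < β) : 0 < KBeta β := lt_of_lt_of_le one_pos (one_le_KBeta hβ)

/-- right continuity along `𝓝[>] x`. -/
lemma hBeta_tendsto_right (hβ : 1 < β) (x : ℝ) :
    Tendsto (hBeta β) (𝓝[>] x) (𝓝 (hBeta β x)) := by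
  refine tendsto_tsum_of_dominated_convergence (summable_geom hβ) (fun n => ?_)
    (Eventually.of_forall fun y => fun n => hBeta_term_bound hβ y n)
  by_cases h : x < betaOrb β n
  · have : ∀ᶠ y in 𝓝[>] x, y < betaOrb β n := by
      have : Ioo x (betaOrb β n) ∈ 𝓝[>] x := Ioo_mem_nhdsGT_of_mem
        ⟨le_refl x, h⟩
      filter_upwards [this] with y hy using hy.2
    simp only [if_pos h]
    refine Tendsto.congr' ?_ tendsto_const_nhds
    filter_upwards [this] with y hy
    simp [hy]
  · have : ∀ᶠ y in 𝓝[>] x, ¬ (y < betaOrb β n) := by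
      filter_upwards [self_mem_nhdsWithin] with y (hy : x < y)
      push_neg at h ⊢
      exact h.trans hy.le
    simp only [if_neg h]
    refine Tendsto.congr' ?_ tendsto_const_nhds
    filter_upwards [this] with y hy
    simp [hy]

lemma hBeta_tendsto_one (hβ : 1 < β) :
    Tendsto (hBeta β) (𝓝[<] (1:ℝ)) (𝓝 1) := by
  have : Tendsto (hBeta β) (𝓝[<] (1:ℝ))
      (𝓝 (∑' n : ℕ, if n = 0 then (1:ℝ) else 0)) := by
    refine tendsto_tsum_of_dominated_convergence (summable_geom hβ) (fun n => ?_)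
      (Eventually.of_forall fun y => fun n => hBeta_term_bound hβ y n)
    rcases eq_or_ne n 0 with rfl | hn
    · simp only [if_pos rfl]
      refine Tendsto.congr' ?_ tendsto_const_nhds
      filter_upwards [self_mem_nhdsWithin] with y (hy : y < 1)
      simp [betaOrb, hy]
    · simp only [if_neg hn]
      refine Tendsto.congr' ?_ tendsto_const_nhds
      have hlt := betaOrb_lt_one (β := β) hn
      have : ∀ᶠ y in 𝓝[<] (1:ℝ), betaOrb β n < y := by
        have := Ioo_mem_nhdsLT_of_mem (α := ℝ) (a := betaOrb β n) (b := 1) (c := 1)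
          ⟨hlt, le_refl 1⟩
        filter_upwards [this] with y hy using hy.1
      filter_upwards [this] with y hy
      simp [not_lt.mpr hy.le]
  simpa using this

lemma hBeta_measurable (hβ : 1 < β) : Measurable (hBeta β) :=
  (hBeta_antitone hβ).measurable

end Aux

theorem stmt_10 (β₁ β₂ : ℝ) (hβ₁ : 1 < β₁) (hβ₂ : 1 < β₂)
    (hni₁ : ¬ ∃ k : ℤ, β₁ = k) (hni₂ : ¬ ∃ k : ℤ, β₂ = k)
    (hν : nuBeta β₁ = nuBeta β₂) :
    (∀ x : ℝ, 0 ≤ x → x < 1 → hBeta β₁ x = hBeta β₂ x) ∧ KBeta β₁ = KBeta β₂ := by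
  have hK1 := KBeta_pos hβ₁
  have hK2 := KBeta_pos hβ₂
  set F : ℝ → ℝ := fun x => hBeta β₁ x / KBeta β₁ with hF
  set G : ℝ → ℝ := fun x => hBeta β₂ x / KBeta β₂ with hG
  have hmF : Measurable F := (hBeta_measurable hβ₁).div_const _
  have hmG : Measurable G := (hBeta_measurable hβ₂).div_const _
  have hae : (fun x => ENNReal.ofReal (F x)) =ᵐ[volume.restrict (Ico (0:ℝ) 1)]
      (fun x => ENNReal.ofReal (G x)) := by
    exact (withDensity_eq_iff_of_sigmaFinite hmF.ennreal_ofReal.aemeasurable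
      hmG.ennreal_ofReal.aemeasurable).mp hν
  have hae' : ∀ᵐ x ∂(volume.restrict (Ico (0:ℝ) 1)), F x = G x := by
    filter_upwards [hae] with x hx
    have h1 : 0 ≤ F x := div_nonneg (hBeta_nonneg hβ₁ x) hK1.le
    have h2 : 0 ≤ G x := div_nonneg (hBeta_nonneg hβ₂ x) hK2.le
    exact (ENNReal.ofReal_eq_ofReal_iff h1 h2).mp hx
  have hae'' : ∀ᵐ x : ℝ, x ∈ Ico (0:ℝ) 1 → F x = G x :=
    (ae_restrict_iff' measurableSet_Ico).mp hae'
  -- everywhere equality on [0,1)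
  have key : ∀ x : ℝ, 0 ≤ x → x < 1 → F x = G x := by
    intro x hx0 hx1
    have hfreq : ∃ᶠ y in 𝓝[>] x, F y = G y := by
      by_contra hcon
      rw [not_frequently] at hcon
      obtain ⟨u, hu_open, hxu, hu⟩ := mem_nhdsWithin.mp hcon
      obtain ⟨δ, hδ, hball⟩ := Metric.isOpen_iff.mp hu_open x hxu
      set m := min (x + δ) 1 with hm
      have hxm : x < m := lt_min (by linarith) hx1
      have hsub : Ioo x m ⊆ {y | ¬ F y = G y} := by
        intro y hy
        refine hu ⟨hball ?_, hy.1⟩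
        rw [Metric.mem_ball, Real.dist_eq, abs_of_nonneg (by linarith [hy.1])]
        have := hy.2
        have : y < x + δ := lt_of_lt_of_le this (min_le_left _ _)
        linarith
      have hnull : volume ({y : ℝ | ¬ (y ∈ Ico (0:ℝ) 1 → F y = G y)}) = 0 := hae''
      have hsub2 : Ioo x m ⊆ {y : ℝ | ¬ (y ∈ Ico (0:ℝ) 1 → F y = G y)} := by
        intro y hy
        have hy01 : y ∈ Ico (0:ℝ) 1 :=
          ⟨le_of_lt (lt_of_le_of_lt hx0 hy.1), lt_of_lt_of_le hy.2 (min_le_right _ _)⟩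
        intro hcontra
        exact hsub hy (hcontra hy01)
      have hle : volume (Ioo x m) ≤ 0 := hnull ▸ measure_mono hsub2
      have : volume (Ioo x m) = 0 := le_antisymm hle zero_le
      rw [Real.volume_Ioo, ENNReal.ofReal_eq_zero] at this
      linarith
    have hFt : Tendsto F (𝓝[>] x) (𝓝 (F x)) := (hBeta_tendsto_right hβ₁ x).div_const _
    have hGt : Tendsto G (𝓝[>] x) (𝓝 (G x)) := (hBeta_tendsto_right hβ₂ x).div_const _
    exact tendsto_nhds_unique_of_frequently_eq hFt hGt hfreq
  -- K equality via limit at 1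
  have hKeq : KBeta β₁ = KBeta β₂ := by
    have hFt : Tendsto F (𝓝[<] (1:ℝ)) (𝓝 (1 / KBeta β₁)) :=
      (hBeta_tendsto_one hβ₁).div_const _
    have hGt : Tendsto G (𝓝[<] (1:ℝ)) (𝓝 (1 / KBeta β₂)) :=
      (hBeta_tendsto_one hβ₂).div_const _
    have hFt' : Tendsto F (𝓝[<] (1:ℝ)) (𝓝 (1 / KBeta β₂)) := by
      refine hGt.congr' ?_
      have : Ioo (0:ℝ) 1 ∈ 𝓝[<] (1:ℝ) :=
        Ioo_mem_nhdsLT_of_mem ⟨one_pos, le_refl 1⟩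
      filter_upwards [this] with y hy
      exact (key y hy.1.le hy.2).symm
    have h := tendsto_nhds_unique hFt hFt'
    rw [div_eq_div_iff hK1.ne' hK2.ne'] at h
    linarith
  refine ⟨fun x hx0 hx1 => ?_, hKeq⟩
  have := key x hx0 hx1
  rw [hF, hG] at this
  simp only at this
  rw [hKeq, div_eq_div_iff hK2.ne' hK2.ne'] at this
  exact mul_right_cancel₀ hK2.ne' this
end

section
/- Let β₁ be the positive root of x² - qx - p = 0 with p, q positive integers, p ≤ q, and let β₂ = β₁ + 1. If log β₁ / log β₂ is rational, then p = q = 1, so that β₁ = (1+√5)/2 and β₂ = β₁² = (3+√5)/2. -/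
open MeasureTheory Filter Set

/-- Powers of a root of `x² = Qx + P` are integer combinations of `1, x`. -/
lemma pow_lin_aux (P Q : ℤ) (k : ℕ) :
    ∃ u v : ℤ, ∀ x : ℝ, x ^ 2 = (Q : ℝ) * x + (P : ℝ) → x ^ k = (u : ℝ) + (v : ℝ) * x := by
  induction k with
  | zero => exact ⟨1, 0, fun x _ => by simp⟩
  | succ k ih =>
    obtain ⟨u, v, h⟩ := ih
    refine ⟨v * P, u + v * Q, fun x hx => ?_⟩
    have hk := h x hx
    push_cast
    linear_combination x * hk + (v : ℝ) * hx

/-- Powers of `x+1` for a root of `x² = Qx + P` are integer combinations of `1, x`. -/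
lemma pow1_lin_aux (P Q : ℤ) (k : ℕ) :
    ∃ u v : ℤ, ∀ x : ℝ, x ^ 2 = (Q : ℝ) * x + (P : ℝ) → (x + 1) ^ k = (u : ℝ) + (v : ℝ) * x := by
  induction k with
  | zero => exact ⟨1, 0, fun x _ => by simp⟩
  | succ k ih =>
    obtain ⟨u, v, h⟩ := ih
    refine ⟨u + v * P, u + v + v * Q, fun x hx => ?_⟩
    have hk := h x hx
    push_cast
    linear_combination (x + 1) * hk + (v : ℝ) * hx

theorem stmt_16 (p q : ℕ) (hp : 1 ≤ p) (hpq : p ≤ q) (β₁ : ℝ) (hβ₁ : 1 < β₁)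
    (hroot : β₁ ^ 2 - q * β₁ - p = 0) (β₂ : ℝ) (hβ₂ : β₂ = β₁ + 1)
    (hlog : ∃ r : ℚ, Real.log β₁ / Real.log β₂ = r) :
    p = 1 ∧ q = 1 ∧ β₁ = (1 + Real.sqrt 5) / 2 ∧ β₂ = β₁ ^ 2 ∧
      β₂ = (3 + Real.sqrt 5) / 2 := by
  have hq1 : 1 ≤ q := le_trans hp hpq
  have hβ₁0 : (0 : ℝ) < β₁ := by linarith
  have hp1 : (1 : ℝ) ≤ (p : ℝ) := by exact_mod_cast hp
  have hpqR : (p : ℝ) ≤ (q : ℝ) := by exact_mod_cast hpq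
  have hr2 : β₁ ^ 2 = (q : ℝ) * β₁ + (p : ℝ) := by linarith
  have hβq : (q : ℝ) < β₁ := by nlinarith
  have hβq1 : β₁ < (q : ℝ) + 1 := by nlinarith
  -- D = q² + 4p is not a perfect square
  have hD : ¬ IsSquare (q ^ 2 + 4 * p) := by
    rintro ⟨k, hk⟩
    have h1 : q < k := by nlinarith
    have h2 : k < q + 2 := by nlinarith
    have h3 : k = q + 1 := by omega
    subst h3
    have : 4 * p = 2 * q + 1 := by nlinarith
    omega
  -- β₁ is irrational
  have hirr : Irrational β₁ := by
    have hsq : Real.sqrt ((q ^ 2 + 4 * p : ℕ) : ℝ) = 2 * β₁ - q := by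
      have he : ((q ^ 2 + 4 * p : ℕ) : ℝ) = (2 * β₁ - q) ^ 2 := by
        push_cast; nlinarith
      rw [he, Real.sqrt_sq (by linarith)]
    have hD' : Irrational (Real.sqrt ((q ^ 2 + 4 * p : ℕ) : ℝ)) :=
      irrational_sqrt_natCast_iff.mpr hD
    rw [hsq] at hD'
    have h2 : Irrational ((2 * β₁ - q + q) / ((2 : ℤ) : ℝ)) :=
      (hD'.add_natCast q).div_intCast (by norm_num)
    have he : (2 * β₁ - q + q) / ((2 : ℤ) : ℝ) = β₁ := by push_cast; ring
    rwa [he] at h2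
  -- extract coprime m, n with β₁^n = β₂^m
  obtain ⟨r, hr⟩ := hlog
  have hβ₂1 : (1 : ℝ) < β₂ := by rw [hβ₂]; linarith
  have hl1 : 0 < Real.log β₁ := Real.log_pos hβ₁
  have hl2 : 0 < Real.log β₂ := Real.log_pos hβ₂1
  have hrpos : 0 < (r : ℝ) := by rw [← hr]; positivity
  have hrpos' : 0 < r := by exact_mod_cast hrpos
  have hnum0 : 0 < r.num := Rat.num_pos.mpr hrpos'
  set m : ℕ := r.num.natAbs with hm
  set n : ℕ := r.den with hn
  have hmn_cop : Nat.Coprime m n := r.reduced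
  have hm1 : 1 ≤ m := Int.natAbs_pos.mpr (ne_of_gt hnum0)
  have hn1 : 1 ≤ n := r.den_pos
  have hmR : (m : ℝ) = (r.num : ℝ) := by
    rw [hm, Nat.cast_natAbs]; exact_mod_cast abs_of_nonneg hnum0.le
  have hkey : (n : ℝ) * Real.log β₁ = (m : ℝ) * Real.log β₂ := by
    have h1 : Real.log β₁ = (r : ℝ) * Real.log β₂ := by
      field_simp at hr; linarith [hr]
    have h2 : (r : ℝ) = (r.num : ℝ) / (r.den : ℝ) := by rw [Rat.cast_def]
    have hd0 : ((r.den : ℝ)) ≠ 0 := by positivity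
    rw [hmR, hn]
    rw [h1, h2]
    field_simp
  have hpow : β₁ ^ n = β₂ ^ m := by
    have e1 : Real.log (β₁ ^ n) = Real.log (β₂ ^ m) := by
      rw [Real.log_pow, Real.log_pow]; exact_mod_cast hkey
    calc β₁ ^ n = Real.exp (Real.log (β₁ ^ n)) := (Real.exp_log (by positivity)).symm
      _ = Real.exp (Real.log (β₂ ^ m)) := by rw [e1]
      _ = β₂ ^ m := Real.exp_log (by positivity)
  have hpow' : β₁ ^ n = (β₁ + 1) ^ m := by rw [← hβ₂]; exact hpow
  -- transfer the identity to the conjugate root β' = q - β₁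
  obtain ⟨u₁, v₁, h1⟩ := pow_lin_aux (p : ℤ) (q : ℤ) n
  obtain ⟨u₂, v₂, h2⟩ := pow1_lin_aux (p : ℤ) (q : ℤ) m
  have hb : β₁ ^ 2 = (((q : ℤ)) : ℝ) * β₁ + (((p : ℤ)) : ℝ) := by push_cast; linarith
  have e₁ := h1 β₁ hb
  have e₂ := h2 β₁ hb
  have hveq : v₁ = v₂ := by
    by_contra hne
    have hne' : ((v₁ : ℝ)) - ((v₂ : ℝ)) ≠ 0 := by
      intro h; apply hne; exact_mod_cast sub_eq_zero.mp h
    apply hirr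
    refine ⟨((u₂ - u₁ : ℤ) : ℚ) / ((v₁ - v₂ : ℤ) : ℚ), ?_⟩
    have : (u₁ : ℝ) + v₁ * β₁ = (u₂ : ℝ) + v₂ * β₁ := by
      rw [← e₁, ← e₂]; exact hpow'
    push_cast
    field_simp
    linarith
  have hueq : (u₁ : ℝ) = (u₂ : ℝ) := by
    have : (u₁ : ℝ) + v₁ * β₁ = (u₂ : ℝ) + v₂ * β₁ := by
      rw [← e₁, ← e₂]; exact hpow'
    rw [hveq] at this; linarith
  set β' : ℝ := (q : ℝ) - β₁ with hβ'
  have hb' : β' ^ 2 = (((q : ℤ)) : ℝ) * β' + (((p : ℤ)) : ℝ) := by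
    rw [hβ']; push_cast; linear_combination hr2
  have e₁' := h1 β' hb'
  have e₂' := h2 β' hb'
  have hconj : β' ^ n = (β' + 1) ^ m := by
    rw [e₁', e₂', hveq, hueq]
  -- multiply with the original relation to get the norm equation
  have hmul1 : β₁ * β' = -(p : ℝ) := by rw [hβ']; linear_combination -hr2
  have hmul2 : (β₁ + 1) * (β' + 1) = (q : ℝ) + 1 - p := by
    rw [hβ']; linear_combination -hr2
  have hprod : (-(p : ℝ)) ^ n = ((q : ℝ) + 1 - p) ^ m := by
    calc (-(p : ℝ)) ^ n = (β₁ * β') ^ n := by rw [hmul1]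
      _ = β₁ ^ n * β' ^ n := mul_pow _ _ _
      _ = (β₁ + 1) ^ m * (β' + 1) ^ m := by rw [hpow', hconj]
      _ = ((β₁ + 1) * (β' + 1)) ^ m := (mul_pow _ _ _).symm
      _ = ((q : ℝ) + 1 - p) ^ m := by rw [hmul2]
  have hsge : (0 : ℝ) ≤ (q : ℝ) + 1 - p := by linarith
  have habs : (p : ℝ) ^ n = ((q : ℝ) + 1 - p) ^ m := by
    have h := congrArg abs hprod
    rwa [abs_pow, abs_pow, abs_neg, abs_of_nonneg (by positivity : (0:ℝ) ≤ (p:ℝ)),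
      abs_of_nonneg hsge] at h
  set s : ℕ := q + 1 - p with hs
  have hsR : ((s : ℕ) : ℝ) = (q : ℝ) + 1 - p := by
    rw [hs]; push_cast [Nat.cast_sub (by omega : p ≤ q + 1)]; ring
  have hps : p ^ n = s ^ m := by
    have h' : ((p : ℝ)) ^ n = ((s : ℝ)) ^ m := by rw [hsR]; exact habs
    exact_mod_cast h'
  -- m < n
  have hnm : m < n := by
    by_contra hc
    push_neg at hc
    have hA : β₁ ^ n ≤ β₁ ^ m := pow_le_pow_right₀ (le_of_lt hβ₁) hc
    have hB : β₁ ^ m < β₂ ^ m :=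
      pow_lt_pow_left₀ (by rw [hβ₂]; linarith) (by positivity) (by omega)
    linarith [hpow]
  rcases eq_or_lt_of_le hp with hp1' | hp2
  · -- p = 1
    have hpeq : p = 1 := hp1'.symm
    have hseq : s = q := by omega
    have hq' : q ^ m = 1 := by
      have h' : s ^ m = 1 := by rw [← hps, hpeq, one_pow]
      rw [← hseq]; exact h'
    have hqe : q = 1 := by
      by_contra hq2
      have h2q : 1 < q := by omega
      have : 1 < q ^ m := Nat.one_lt_pow (by omega) h2q
      omega
    have hQR : (q : ℝ) = 1 := by rw [hqe]; norm_num
    have hPR : (p : ℝ) = 1 := by rw [hpeq]; norm_num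
    have hgold : β₁ ^ 2 = β₁ + 1 := by rw [hr2, hQR, hPR]; ring
    have hsqrt5 : Real.sqrt 5 = 2 * β₁ - 1 := by
      rw [show (5 : ℝ) = (2 * β₁ - 1) ^ 2 by linear_combination (-4 : ℝ) * hgold]
      exact Real.sqrt_sq (by linarith)
    refine ⟨hpeq, hqe, by linarith [hsqrt5], ?_, ?_⟩
    · rw [hβ₂]; linarith [hgold]
    · rw [hβ₂]; linarith [hsqrt5]
  · -- p ≥ 2: contradiction
    exfalso
    have hp2' : 2 ≤ p := hp2
    set ℓ : ℕ := p.minFac with hℓ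
    have hℓp : ℓ.Prime := Nat.minFac_prime (by omega)
    have hv0 : 0 < p.factorization ℓ :=
      hℓp.factorization_pos_of_dvd (by omega) (Nat.minFac_dvd p)
    have hfac := congrArg Nat.factorization hps
    rw [Nat.factorization_pow, Nat.factorization_pow] at hfac
    have hfℓ : n * p.factorization ℓ = m * s.factorization ℓ := by
      have := DFunLike.congr_fun hfac ℓ
      simpa using this
    have hdvd : m ∣ n * p.factorization ℓ := ⟨s.factorization ℓ, hfℓ⟩
    have hmd : m ∣ p.factorization ℓ :=
      (Nat.Coprime.dvd_of_dvd_mul_left hmn_cop hdvd)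
    have hmv : m ≤ p.factorization ℓ := Nat.le_of_dvd hv0 hmd
    have h2m : 2 ^ m ≤ p := by
      calc 2 ^ m ≤ ℓ ^ m := Nat.pow_le_pow_left hℓp.two_le m
        _ ≤ ℓ ^ (p.factorization ℓ) := Nat.pow_le_pow_right hℓp.pos hmv
        _ ≤ p := Nat.le_of_dvd (by omega) (Nat.ordProj_dvd p ℓ)
    have h2mR : (2 : ℝ) ^ m ≤ (p : ℝ) := by exact_mod_cast h2m
    have hA : β₁ ^ (n - m) * β₁ ^ m = β₁ ^ n := by
      rw [← pow_add]; congr 1; omega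
    have hB : (β₁ + 1) ^ m < (2 * β₁) ^ m :=
      pow_lt_pow_left₀ (by linarith) (by linarith) (by omega)
    rw [mul_pow] at hB
    have hpm : (0 : ℝ) < β₁ ^ m := by positivity
    have hC : β₁ ^ (n - m) < 2 ^ m := by
      have h' : β₁ ^ (n - m) * β₁ ^ m < 2 ^ m * β₁ ^ m := by
        rw [hA, hpow']; exact hB
      exact lt_of_mul_lt_mul_right h' (le_of_lt hpm)
    have hD2 : β₁ ≤ β₁ ^ (n - m) := le_self_pow₀ (le_of_lt hβ₁) (by omega)
    linarith
end

section
/- Let p, q be positive integers with minimal polynomial condition: if x² - qx - p divides x^n - (x+1)^m in ℤ[x] for some positive integers m, n, then p = 1 and q = 1. -/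
open Polynomial

theorem stmt_17 (p q : ℕ) (hp : 1 ≤ p) (hq : 1 ≤ q) (m n : ℕ) (hm : 1 ≤ m) (hn : 1 ≤ n)
    (hdvd : (X ^ 2 - C (q : ℤ) * X - C (p : ℤ)) ∣ (X ^ n - (X + 1) ^ m)) :
    p = 1 ∧ q = 1 := by
  have h0 := Polynomial.eval_dvd (x := (0:ℤ)) hdvd
  have h1 := Polynomial.eval_dvd (x := (-1:ℤ)) hdvd
  simp [zero_pow (by omega : n ≠ 0), zero_pow (by omega : m ≠ 0)] at h0 h1
  have hp1 : p = 1 := by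
    rcases Int.isUnit_iff.mp (isUnit_of_dvd_one h0) with h | h <;> omega
  subst hp1
  simp only [Nat.cast_one, add_sub_cancel_left] at h1
  have hq1 : IsUnit (q : ℤ) := isUnit_of_dvd_unit h1 (isUnit_one.neg.pow n)
  rcases Int.isUnit_iff.mp hq1 with h | h <;> omega
end
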